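/- Let Λ̂ = diag(λ₂, …, λ_n) with all λ_i > 0 and let F be a real (n−1)×k matrix. Then sup_{ω ∈ ℝ} ‖F^T (jωI + Λ̂)^{-1} F‖₂ = ‖F^T Λ̂^{-1} F‖₂, and this value is finite. -/

import Mathlib

open Matrix
open scoped Matrix.Norms.L2Operator

variable {𝕜 : Type*} [RCLike 𝕜]

/-- Euclidean norm of a plain pi-type vector. -/
noncomputable def evnorm {m : ℕ} (v : Fin m → 𝕜) : ℝ :=
  ‖((WithLp.equiv 2 (Fin m → 𝕜)).symm v : EuclideanSpace 𝕜 (Fin m))‖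

lemma evnorm_eq {m : ℕ} (v : Fin m → 𝕜) : evnorm v = Real.sqrt (∑ i, ‖v i‖ ^ 2) := by
  rw [evnorm, EuclideanSpace.norm_eq]
  simp

lemma evnorm_nonneg {m : ℕ} (v : Fin m → 𝕜) : 0 ≤ evnorm v := norm_nonneg _

lemma aux_opnorm_le {m n : ℕ} (A : Matrix (Fin m) (Fin n) 𝕜) {C : ℝ} (hC : 0 ≤ C)
    (h : ∀ x : Fin n → 𝕜, evnorm (A *ᵥ x) ≤ C * evnorm x) : ‖A‖ ≤ C := by
  rw [Matrix.l2_opNorm_def]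
  refine ContinuousLinearMap.opNorm_le_bound _ hC fun x => ?_
  simpa [Matrix.toEuclideanLin_apply, evnorm] using h ((WithLp.equiv 2 (Fin n → 𝕜)) x)

lemma aux_mulvec_le {m n : ℕ} (A : Matrix (Fin m) (Fin n) 𝕜) (x : Fin n → 𝕜) :
    evnorm (A *ᵥ x) ≤ ‖A‖ * evnorm x := by
  simpa [evnorm] using A.l2_opNorm_mulVec ((WithLp.equiv 2 (Fin n → 𝕜)).symm x)

lemma aux_cs {m : ℕ} (y z : Fin m → 𝕜) : ‖star y ⬝ᵥ z‖ ≤ evnorm y * evnorm z := by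
  have := norm_inner_le_norm (𝕜 := 𝕜) ((WithLp.equiv 2 (Fin m → 𝕜)).symm y)
    ((WithLp.equiv 2 (Fin m → 𝕜)).symm z)
  simpa [EuclideanSpace.inner_toLp_toLp, dotProduct_comm z (star y), evnorm] using this

lemma aux_self_dot {m : ℕ} (y : Fin m → ℂ) : star y ⬝ᵥ y = ((evnorm y) ^ 2 : ℝ) := by
  rw [evnorm_eq]
  rw [Real.sq_sqrt (by positivity)]
  push_cast
  simp [dotProduct, Complex.mul_conj', mul_comm, Complex.normSq_eq_norm_sq,
    Complex.sq_norm]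

lemma evnorm_ofReal {m : ℕ} (v : Fin m → ℝ) :
    evnorm (fun i => (v i : ℂ)) = evnorm v := by
  simp [evnorm_eq]

lemma map_mulVec_ofReal {m n : ℕ} (A : Matrix (Fin m) (Fin n) ℝ) (x : Fin n → ℝ) :
    (A.map (fun x : ℝ => (x : ℂ))) *ᵥ (fun i => (x i : ℂ)) = fun i => (((A *ᵥ x) i : ℝ) : ℂ) := by
  ext i
  simp [Matrix.mulVec, dotProduct]

lemma aux_map_norm {m n : ℕ} (A : Matrix (Fin m) (Fin n) ℝ) :
    ‖A.map (fun x : ℝ => (x : ℂ))‖ = ‖A‖ := by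
  apply le_antisymm
  · apply aux_opnorm_le _ (norm_nonneg A)
    intro z
    set u : Fin n → ℝ := fun j => (z j).re with hu
    set w : Fin n → ℝ := fun j => (z j).im with hw
    have hz2 : evnorm z ^ 2 = evnorm u ^ 2 + evnorm w ^ 2 := by
      simp only [evnorm_eq]
      rw [Real.sq_sqrt (by positivity), Real.sq_sqrt (by positivity),
        Real.sq_sqrt (by positivity), ← Finset.sum_add_distrib]
      congr 1; ext j
      simp [Complex.sq_norm, Complex.normSq_apply, ← sq, sq_abs, hu, hw]
    have hAz : ∀ i, ‖((A.map (fun x : ℝ => (x : ℂ))) *ᵥ z) i‖ ^ 2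
        = ((A *ᵥ u) i) ^ 2 + ((A *ᵥ w) i) ^ 2 := by
      intro i
      have hre : (((A.map (fun x : ℝ => (x : ℂ))) *ᵥ z) i).re = (A *ᵥ u) i := by
        simp [Matrix.mulVec, dotProduct, Complex.re_sum, hu]
      have him : (((A.map (fun x : ℝ => (x : ℂ))) *ᵥ z) i).im = (A *ᵥ w) i := by
        simp [Matrix.mulVec, dotProduct, Complex.im_sum, hw]
      rw [Complex.sq_norm, Complex.normSq_apply, hre, him]
      ring
    calc evnorm ((A.map (fun x : ℝ => (x : ℂ))) *ᵥ z)
        = Real.sqrt (∑ i, ((A *ᵥ u) i ^ 2 + (A *ᵥ w) i ^ 2)) := by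
          rw [evnorm_eq]; congr 1; exact Finset.sum_congr rfl fun i _ => hAz i
      _ = Real.sqrt (evnorm (A *ᵥ u) ^ 2 + evnorm (A *ᵥ w) ^ 2) := by
          rw [Finset.sum_add_distrib]
          simp only [evnorm_eq]
          rw [Real.sq_sqrt (by positivity), Real.sq_sqrt (by positivity)]
          simp [sq_abs]
      _ ≤ Real.sqrt ((‖A‖ * evnorm u) ^ 2 + (‖A‖ * evnorm w) ^ 2) := by
          apply Real.sqrt_le_sqrt
          exact add_le_add (pow_le_pow_left₀ (evnorm_nonneg _) (aux_mulvec_le A u) 2)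
            (pow_le_pow_left₀ (evnorm_nonneg _) (aux_mulvec_le A w) 2)
      _ = ‖A‖ * evnorm z := by
          rw [mul_pow, mul_pow, ← mul_add, Real.sqrt_mul (by positivity), ← hz2,
            Real.sqrt_sq (norm_nonneg A), Real.sqrt_sq (evnorm_nonneg z)]
  · apply aux_opnorm_le _ (norm_nonneg _)
    intro x
    have := aux_mulvec_le (A.map (fun x : ℝ => (x : ℂ))) (fun i => (x i : ℂ))
    rw [map_mulVec_ofReal, evnorm_ofReal, evnorm_ofReal] at this
    exact this

set_option maxHeartbeats 1000000 in
lemma aux_sqrt_mul {c a b : ℝ} (hc : 0 ≤ c) (ha : 0 ≤ a) (hb : 0 ≤ b) :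
    Real.sqrt (c * a ^ 2) * Real.sqrt (c * b ^ 2) = c * (a * b) := by
  rw [Real.sqrt_mul hc, Real.sqrt_mul hc, Real.sqrt_sq ha, Real.sqrt_sq hb]
  rw [mul_mul_mul_comm, Real.mul_self_sqrt hc]

lemma aux_cancel {a b c : ℝ} (h : a ^ 2 ≤ c * (a * b)) (ha : 0 < a) : a ≤ c * b := by
  have h2 : a * a ≤ c * b * a := by nlinarith
  exact le_of_mul_le_mul_right h2 ha

theorem stmt_13 {p k : ℕ} (d : Fin p → ℝ) (hd : ∀ i, 0 < d i)
    (F : Matrix (Fin p) (Fin k) ℝ) :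
    IsGreatest {r : ℝ | ∃ ω : ℝ, r =
        ‖(F.map (fun x : ℝ => (x : ℂ)))ᵀ *
          (((ω : ℂ) * Complex.I) • (1 : Matrix (Fin p) (Fin p) ℂ) +
            diagonal (fun i => (d i : ℂ)))⁻¹ * F.map (fun x : ℝ => (x : ℂ))‖}
      ‖Fᵀ * (diagonal d)⁻¹ * F‖ := by
  classical
  set Fc : Matrix (Fin p) (Fin k) ℂ := F.map (fun x : ℝ => (x : ℂ)) with hFc
  -- the resolvent as a diagonal matrix
  have hdiag : ∀ ω : ℝ, (((ω : ℂ) * Complex.I) • (1 : Matrix (Fin p) (Fin p) ℂ) +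
      diagonal (fun i => (d i : ℂ)))⁻¹
        = diagonal (fun i => ((ω : ℂ) * Complex.I + (d i : ℂ))⁻¹) := by
    intro ω
    rw [smul_one_eq_diagonal, diagonal_add]
    apply inv_eq_right_inv
    rw [diagonal_mul_diagonal, ← diagonal_one]
    have h0 : ∀ i : Fin p, (ω : ℂ) * Complex.I + (d i : ℂ) ≠ 0 := by
      intro i h
      have := congrArg Complex.re h
      simp at this
      exact (hd i).ne' this
    exact congrArg diagonal (funext fun i => mul_inv_cancel₀ (h0 i))
  -- the quadratic/bilinear form of the transfer matrix
  have hdot : ∀ (c : Fin p → ℂ) (x y : Fin k → ℂ),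
      star y ⬝ᵥ (Fcᵀ * diagonal c * Fc) *ᵥ x
        = ∑ i, (starRingEnd ℂ) ((Fc *ᵥ y) i) * c i * ((Fc *ᵥ x) i) := by
    intro c x y
    have hstar : Fc *ᵥ star y = star (Fc *ᵥ y) := by
      ext i
      simp [hFc, mulVec, dotProduct, star_sum, Complex.conj_ofReal]
    rw [← mulVec_mulVec, ← mulVec_mulVec, dotProduct_mulVec, vecMul_transpose, hstar]
    simp [dotProduct, mulVec_diagonal, mul_assoc]
  -- notation for the DC-gain matrix over ℂ
  set G0 : Matrix (Fin k) (Fin k) ℂ :=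
    Fcᵀ * diagonal (fun i => ((d i : ℂ))⁻¹) * Fc with hG0
  -- the quadratic form of `G0`
  have h0 : ∀ x : Fin k → ℂ,
      star x ⬝ᵥ G0 *ᵥ x = ((∑ i, ‖(Fc *ᵥ x) i‖ ^ 2 / d i : ℝ) : ℂ) := by
    intro x
    rw [hG0, hdot]
    push_cast
    refine Finset.sum_congr rfl fun i _ => ?_
    have h1 : ((‖(Fc *ᵥ x) i‖ : ℂ)) ^ 2
        = (starRingEnd ℂ) ((Fc *ᵥ x) i) * ((Fc *ᵥ x) i) := by
      rw [← Complex.normSq_eq_conj_mul_self, Complex.normSq_eq_norm_sq]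
      norm_cast
    rw [h1]
    ring
  have hq_nonneg : ∀ x : Fin k → ℂ, (0:ℝ) ≤ ∑ i, ‖(Fc *ᵥ x) i‖ ^ 2 / d i := fun x =>
    Finset.sum_nonneg fun i _ => div_nonneg (by positivity) (hd i).le
  -- the quadratic form of `G0` is controlled by its norm
  have hqb : ∀ x : Fin k → ℂ,
      ∑ i, ‖(Fc *ᵥ x) i‖ ^ 2 / d i ≤ ‖G0‖ * evnorm x ^ 2 := by
    intro x
    have h1 : ∑ i, ‖(Fc *ᵥ x) i‖ ^ 2 / d i = ‖star x ⬝ᵥ G0 *ᵥ x‖ := by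
      rw [h0, Complex.norm_real, Real.norm_eq_abs, abs_of_nonneg (hq_nonneg x)]
    rw [h1]
    calc ‖star x ⬝ᵥ G0 *ᵥ x‖ ≤ evnorm x * evnorm (G0 *ᵥ x) := aux_cs x _
      _ ≤ evnorm x * (‖G0‖ * evnorm x) :=
          mul_le_mul_of_nonneg_left (aux_mulvec_le _ _) (evnorm_nonneg _)
      _ = ‖G0‖ * evnorm x ^ 2 := by ring
  -- the off-axis bilinear form is controlled by the DC quadratic forms
  have hbound : ∀ (ω : ℝ) (x y : Fin k → ℂ),
      ‖star y ⬝ᵥ (Fcᵀ * diagonal (fun i => ((ω : ℂ) * Complex.I + (d i : ℂ))⁻¹) * Fc) *ᵥ x‖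
        ≤ Real.sqrt (∑ i, ‖(Fc *ᵥ y) i‖ ^ 2 / d i) *
            Real.sqrt (∑ i, ‖(Fc *ᵥ x) i‖ ^ 2 / d i) := by
    intro ω x y
    rw [hdot]
    have hc : ∀ i, ‖((ω : ℂ) * Complex.I + (d i : ℂ))⁻¹‖ ≤ (d i)⁻¹ := by
      intro i
      rw [norm_inv]
      refine inv_anti₀ (hd i) ?_
      calc d i = |((ω : ℂ) * Complex.I + (d i : ℂ)).re| := by
            simp [abs_of_nonneg (hd i).le]
        _ ≤ ‖(ω : ℂ) * Complex.I + (d i : ℂ)‖ := Complex.abs_re_le_norm _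
    calc ‖∑ i, (starRingEnd ℂ) ((Fc *ᵥ y) i) * ((ω : ℂ) * Complex.I + (d i : ℂ))⁻¹ *
            ((Fc *ᵥ x) i)‖
        ≤ ∑ i, ‖(starRingEnd ℂ) ((Fc *ᵥ y) i) * ((ω : ℂ) * Complex.I + (d i : ℂ))⁻¹ *
            ((Fc *ᵥ x) i)‖ := norm_sum_le _ _
      _ ≤ ∑ i, (‖(Fc *ᵥ y) i‖ / Real.sqrt (d i)) * (‖(Fc *ᵥ x) i‖ / Real.sqrt (d i)) := by
          refine Finset.sum_le_sum fun i _ => ?_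
          rw [norm_mul, norm_mul, RCLike.norm_conj, div_mul_div_comm,
            Real.mul_self_sqrt (hd i).le]
          calc ‖(Fc *ᵥ y) i‖ * ‖((ω : ℂ) * Complex.I + (d i : ℂ))⁻¹‖ * ‖(Fc *ᵥ x) i‖
              ≤ ‖(Fc *ᵥ y) i‖ * (d i)⁻¹ * ‖(Fc *ᵥ x) i‖ := by
                have := hc i
                gcongr
            _ = ‖(Fc *ᵥ y) i‖ * ‖(Fc *ᵥ x) i‖ / d i := by ring
      _ ≤ Real.sqrt (∑ i, (‖(Fc *ᵥ y) i‖ / Real.sqrt (d i)) ^ 2) *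
            Real.sqrt (∑ i, (‖(Fc *ᵥ x) i‖ / Real.sqrt (d i)) ^ 2) :=
          Real.sum_mul_le_sqrt_mul_sqrt _ _ _
      _ = Real.sqrt (∑ i, ‖(Fc *ᵥ y) i‖ ^ 2 / d i) *
            Real.sqrt (∑ i, ‖(Fc *ᵥ x) i‖ ^ 2 / d i) := by
          congr 2 <;> exact Finset.sum_congr rfl fun i _ => by
            rw [div_pow, Real.sq_sqrt (hd i).le]
  -- the norm bound at each frequency
  have hub : ∀ ω : ℝ,
      ‖Fcᵀ * diagonal (fun i => ((ω : ℂ) * Complex.I + (d i : ℂ))⁻¹) * Fc‖ ≤ ‖G0‖ := by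
    intro ω
    set M : Matrix (Fin k) (Fin k) ℂ :=
      Fcᵀ * diagonal (fun i => ((ω : ℂ) * Complex.I + (d i : ℂ))⁻¹) * Fc with hM
    apply aux_opnorm_le _ (norm_nonneg _)
    intro x
    have h2 : evnorm (M *ᵥ x) ^ 2 ≤ ‖G0‖ * (evnorm (M *ᵥ x) * evnorm x) := by
      have e1 : (evnorm (M *ᵥ x) ^ 2 : ℝ) = ‖star (M *ᵥ x) ⬝ᵥ M *ᵥ x‖ := by
        rw [aux_self_dot, Complex.norm_real, Real.norm_eq_abs,
          abs_of_nonneg (by positivity)]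
      rw [e1]
      calc ‖star (M *ᵥ x) ⬝ᵥ M *ᵥ x‖
          ≤ Real.sqrt (∑ i, ‖(Fc *ᵥ (M *ᵥ x)) i‖ ^ 2 / d i) *
              Real.sqrt (∑ i, ‖(Fc *ᵥ x) i‖ ^ 2 / d i) := by
              simpa only [← hM] using hbound ω x (M *ᵥ x)
        _ ≤ Real.sqrt (‖G0‖ * evnorm (M *ᵥ x) ^ 2) *
              Real.sqrt (‖G0‖ * evnorm x ^ 2) := by
            exact mul_le_mul (Real.sqrt_le_sqrt (hqb _)) (Real.sqrt_le_sqrt (hqb _))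
              (Real.sqrt_nonneg _) (Real.sqrt_nonneg _)
        _ = ‖G0‖ * (evnorm (M *ᵥ x) * evnorm x) := by
            exact aux_sqrt_mul (norm_nonneg _) (evnorm_nonneg _) (evnorm_nonneg _)
    by_cases h : evnorm (M *ᵥ x) = 0
    · rw [h]
      exact mul_nonneg (norm_nonneg _) (evnorm_nonneg _)
    · have hpos : 0 < evnorm (M *ᵥ x) := (evnorm_nonneg _).lt_of_ne' h
      exact aux_cancel h2 hpos
  -- identification of `G0` with the complexification of the real DC matrix
  have hmap : G0 = (Fᵀ * (diagonal d)⁻¹ * F).map (fun x : ℝ => (x : ℂ)) := by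
    have hdr : (diagonal d)⁻¹ = diagonal (fun i => (d i)⁻¹) := by
      apply inv_eq_right_inv
      rw [diagonal_mul_diagonal, ← diagonal_one]
      exact congrArg diagonal (funext fun i => mul_inv_cancel₀ (hd i).ne')
    have hcoe : (fun x : ℝ => (x : ℂ)) = ⇑Complex.ofRealHom := rfl
    rw [hdr, hG0, hFc, hcoe, Matrix.map_mul, Matrix.map_mul, Matrix.transpose_map]
    congr 1
    rw [Matrix.diagonal_map (by simp)]
    congr 1
    funext i
    simp
  have hnorm0 : ‖G0‖ = ‖Fᵀ * (diagonal d)⁻¹ * F‖ := by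
    rw [hmap, aux_map_norm]
  constructor
  · refine ⟨0, ?_⟩
    rw [hdiag 0, ← hnorm0, hG0]
    congr 3
    funext i
    norm_num
  · rintro r ⟨ω, rfl⟩
    rw [hdiag ω, ← hnorm0]
    exact hub ω
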